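/- Let E be a set of pairs (i,j) with 1 ≤ i < j ≤ N, and let Γ_E be the simple graph on vertex set {1,…,N} with edge set E. Then the Lie subalgebra Lie({A_{ij} : (i,j) ∈ E}) equals the linear span of the set consisting of all A_{ij} with i ≠ j such that i and j lie in the same connected component of Γ_E, together with all B_{ijk} with i, j, k pairwise distinct such that i, j, k all lie in the same connected component of Γ_E. -/

import Mathlib

/-- `A i j = E i j + E j i - E i i - E j j`. -/
noncomputable def Amat (N : ℕ) (i j : Fin N) : Matrix (Fin N) (Fin N) ℝ :=
  Matrix.single i j 1 + Matrix.single j i 1 -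
    Matrix.single i i 1 - Matrix.single j j 1

/-- `B i j k = (E i k - E k i) - (E i j - E j i) - (E j k - E k j)`. -/
noncomputable def Bmat (N : ℕ) (i j k : Fin N) : Matrix (Fin N) (Fin N) ℝ :=
  (Matrix.single i k 1 - Matrix.single k i 1) -
    (Matrix.single i j 1 - Matrix.single j i 1) -
    (Matrix.single j k 1 - Matrix.single k j 1)

attribute [local instance] LieRing.ofAssociativeRing

/-- The smallest Lie subalgebra (linear subspace closed under the commutator)
of the `N × N` real matrices containing a set `S`. -/
noncomputable def lieGen (N : ℕ) (S : Set (Matrix (Fin N) (Fin N) ℝ)) :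
    LieSubalgebra ℝ (Matrix (Fin N) (Fin N) ℝ) :=
  LieSubalgebra.lieSpan ℝ (Matrix (Fin N) (Fin N) ℝ) S

/-- The simple graph on `{1,…,N}` whose edges are the pairs in `E`. -/
def graphOf (N : ℕ) (E : Set (Fin N × Fin N)) : SimpleGraph (Fin N) where
  Adj a b := a ≠ b ∧ ((a, b) ∈ E ∨ (b, a) ∈ E)
  symm := by
    constructor
    intro a b h
    exact ⟨h.1.symm, h.2.symm⟩
  loopless := by
    constructor
    intro a h
    exact h.1 rfl

open Matrix

noncomputable section AuxLie

variable {N : ℕ}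

/-- indicator vector `e_i`. -/
def sv (N : ℕ) (i : Fin N) : Fin N → ℝ := fun x => if x = i then 1 else 0

/-- `e_i - e_j` as a vector. -/
def vvec (N : ℕ) (i j : Fin N) : Fin N → ℝ := sv N i - sv N j

lemma vvec_self (i : Fin N) : vvec N i i = 0 := by simp [vvec]

lemma vvec_symm (i j : Fin N) : vvec N j i = -vvec N i j := by
  simp [vvec, neg_sub]

lemma vvec_trans (i j k : Fin N) : vvec N i k = vvec N i j + vvec N j k := by
  simp [vvec, sub_add_sub_cancel]

lemma dot_sv (i j : Fin N) : sv N i ⬝ᵥ sv N j = if i = j then (1:ℝ) else 0 := by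
  simp [dotProduct, sv, ite_and, Finset.sum_ite_eq', eq_comm]

lemma dot_vvec (i j k l : Fin N) :
    vvec N i j ⬝ᵥ vvec N k l =
      (if i = k then (1:ℝ) else 0) - (if i = l then 1 else 0) -
        (if j = k then 1 else 0) + (if j = l then 1 else 0) := by
  simp only [vvec, sub_dotProduct, dotProduct_sub, dot_sv]
  ring

lemma dot_vvec_zero {i j k l : Fin N} (h1 : i ≠ k) (h2 : i ≠ l) (h3 : j ≠ k)
    (h4 : j ≠ l) : vvec N i j ⬝ᵥ vvec N k l = 0 := by
  rw [dot_vvec]; simp [h1, h2, h3, h4]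

lemma vmv_mul (u v w z : Fin N → ℝ) :
    vecMulVec u v * vecMulVec w z = (v ⬝ᵥ w) • vecMulVec u z := by
  ext a b
  simp only [mul_apply, vecMulVec_apply, Matrix.smul_apply, smul_eq_mul, dotProduct,
    Finset.sum_mul]
  apply Finset.sum_congr rfl
  intro x _
  ring

/-- symmetric rank ≤ 2. -/
def symT {N : ℕ} (u w : Fin N → ℝ) : Matrix (Fin N) (Fin N) ℝ :=
  vecMulVec u w + vecMulVec w u

/-- antisymmetric rank ≤ 2. -/
def skw {N : ℕ} (u v : Fin N → ℝ) : Matrix (Fin N) (Fin N) ℝ :=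
  vecMulVec u v - vecMulVec v u

lemma vecMulVec_add_right (u v w : Fin N → ℝ) :
    vecMulVec u (v + w) = vecMulVec u v + vecMulVec u w := by
  ext a b; simp [vecMulVec_apply, mul_add]

lemma vecMulVec_add_left (u v w : Fin N → ℝ) :
    vecMulVec (u + v) w = vecMulVec u w + vecMulVec v w := by
  ext a b; simp [vecMulVec_apply, add_mul]

lemma vecMulVec_sub_right (u v w : Fin N → ℝ) :
    vecMulVec u (v - w) = vecMulVec u v - vecMulVec u w := by
  ext a b; simp [vecMulVec_apply, mul_sub]

lemma vecMulVec_sub_left (u v w : Fin N → ℝ) :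
    vecMulVec (u - v) w = vecMulVec u w - vecMulVec v w := by
  ext a b; simp [vecMulVec_apply, sub_mul]

lemma vecMulVec_neg_right (u v : Fin N → ℝ) :
    vecMulVec u (-v) = -vecMulVec u v := by
  ext a b; simp [vecMulVec_apply]

lemma vecMulVec_neg_left (u v : Fin N → ℝ) :
    vecMulVec (-u) v = -vecMulVec u v := by
  ext a b; simp [vecMulVec_apply]

lemma vecMulVec_zero_right (u : Fin N → ℝ) : vecMulVec u (0 : Fin N → ℝ) = 0 := by
  ext a b; simp [vecMulVec_apply]

lemma vecMulVec_zero_left (u : Fin N → ℝ) : vecMulVec (0 : Fin N → ℝ) u = 0 := by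
  ext a b; simp [vecMulVec_apply]

lemma skw_add_right (u v w : Fin N → ℝ) : skw u (v + w) = skw u v + skw u w := by
  simp only [skw, vecMulVec_add_right, vecMulVec_add_left]; abel

lemma skw_neg_right (u v : Fin N → ℝ) : skw u (-v) = -skw u v := by
  simp only [skw, vecMulVec_neg_right, vecMulVec_neg_left]; abel

lemma skw_zero_right (u : Fin N → ℝ) : skw u 0 = 0 := by
  simp [skw, vecMulVec_zero_right, vecMulVec_zero_left]

lemma skw_same (u : Fin N → ℝ) : skw u u = 0 := by simp [skw]

lemma skw_swap (u v : Fin N → ℝ) : skw v u = -skw u v := by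
  simp [skw, neg_sub]

lemma symT_add_right (u v w : Fin N → ℝ) : symT u (v + w) = symT u v + symT u w := by
  simp only [symT, vecMulVec_add_right, vecMulVec_add_left]; abel

lemma symT_neg_right (u v : Fin N → ℝ) : symT u (-v) = -symT u v := by
  simp only [symT, vecMulVec_neg_right, vecMulVec_neg_left]; abel

lemma symT_zero_right (u : Fin N → ℝ) : symT u 0 = 0 := by
  simp [symT, vecMulVec_zero_right, vecMulVec_zero_left]

/-- Expansion of `P (u+v)`. -/
lemma pexpand (u w : Fin N → ℝ) :
    vecMulVec (u + w) (u + w) = vecMulVec u u + vecMulVec w w + symT u w := by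
  simp only [symT, vecMulVec_add_right, vecMulVec_add_left]; abel

lemma lie_PP (u v : Fin N → ℝ) :
    ⁅vecMulVec u u, vecMulVec v v⁆ = (u ⬝ᵥ v) • skw u v := by
  rw [Ring.lie_def, vmv_mul, vmv_mul, dotProduct_comm v u, skw, smul_sub]

lemma lie_PSkw (u v w : Fin N → ℝ) :
    ⁅vecMulVec u u, skw v w⁆ = (u ⬝ᵥ v) • symT u w - (u ⬝ᵥ w) • symT u v := by
  simp only [Ring.lie_def, skw, symT, mul_sub, sub_mul, vmv_mul,
    dotProduct_comm v u, dotProduct_comm w u]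
  module

lemma lie_SkwSkw (u v x y : Fin N → ℝ) :
    ⁅skw u v, skw x y⁆ = (v ⬝ᵥ x) • skw u y - (v ⬝ᵥ y) • skw u x -
      (u ⬝ᵥ x) • skw v y + (u ⬝ᵥ y) • skw v x := by
  simp only [Ring.lie_def, skw, mul_sub, sub_mul, vmv_mul,
    dotProduct_comm x v, dotProduct_comm y v, dotProduct_comm x u, dotProduct_comm y u]
  module

lemma std_eq (i j : Fin N) :
    Matrix.single i j (1:ℝ) = vecMulVec (sv N i) (sv N j) := by
  ext a b
  simp only [Matrix.single, of_apply, vecMulVec_apply, sv, ite_and, eq_comm,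
    ite_mul, mul_ite, one_mul, mul_one, mul_zero, zero_mul]
  split_ifs <;> rfl

lemma Amat_eq (i j : Fin N) : Amat N i j = -vecMulVec (vvec N i j) (vvec N i j) := by
  simp only [Amat, std_eq, vvec, vecMulVec_sub_left, vecMulVec_sub_right]
  abel

lemma Bmat_eq (i j k : Fin N) : Bmat N i j k = skw (vvec N j k) (vvec N i j) := by
  simp only [Bmat, std_eq, skw, vvec, vecMulVec_sub_left, vecMulVec_sub_right]
  abel

lemma Amat_self (i : Fin N) : Amat N i i = 0 := by
  rw [Amat_eq, vvec_self, vecMulVec_zero_left, neg_zero]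

lemma Amat_comm (i j : Fin N) : Amat N i j = Amat N j i := by
  simp only [Amat]; abel

end AuxLie
section Main2

variable {N : ℕ} {E : Set (Fin N × Fin N)}

/-- The generating set. -/
def Sgen (N : ℕ) (E : Set (Fin N × Fin N)) : Set (Matrix (Fin N) (Fin N) ℝ) :=
  {M | ∃ p ∈ E, M = Amat N p.1 p.2}

/-- Reachability abbreviation. -/
abbrev Rch (N : ℕ) (E : Set (Fin N × Fin N)) : Fin N → Fin N → Prop :=
  (graphOf N E).Reachable

/-- The target spanning set. -/
def Tgen (N : ℕ) (E : Set (Fin N × Fin N)) : Set (Matrix (Fin N) (Fin N) ℝ) :=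
  {M | ∃ i j : Fin N, i ≠ j ∧ (graphOf N E).Reachable i j ∧ M = Amat N i j} ∪
    {M | ∃ i j k : Fin N, i ≠ j ∧ i ≠ k ∧ j ≠ k ∧
      (graphOf N E).Reachable i j ∧ (graphOf N E).Reachable j k ∧ M = Bmat N i j k}

lemma memA {i j : Fin N} (h : Rch N E i j) : Amat N i j ∈ Submodule.span ℝ (Tgen N E) := by
  by_cases hij : i = j
  · subst hij; rw [Amat_self]; exact zero_mem _
  · exact Submodule.subset_span (Or.inl ⟨i, j, hij, h, rfl⟩)

lemma memB {i j k : Fin N} (hij : i ≠ j) (hik : i ≠ k) (hjk : j ≠ k)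
    (h1 : Rch N E i j) (h2 : Rch N E j k) : Bmat N i j k ∈ Submodule.span ℝ (Tgen N E) :=
  Submodule.subset_span (Or.inr ⟨i, j, k, hij, hik, hjk, h1, h2, rfl⟩)

lemma symT_base {a b c : Fin N} (h1 : Rch N E a b) (h2 : Rch N E b c) :
    symT (vvec N a b) (vvec N b c) ∈ Submodule.span ℝ (Tgen N E) := by
  have key : symT (vvec N a b) (vvec N b c) =
      Amat N a b + Amat N b c - Amat N a c := by
    have h := pexpand (vvec N a b) (vvec N b c)
    rw [← vvec_trans] at h
    rw [Amat_eq, Amat_eq, Amat_eq, h]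
    abel
  rw [key]
  exact sub_mem (add_mem (memA h1) (memA h2)) (memA (h1.trans h2))

lemma symT_mem {a b c d : Fin N} (h1 : Rch N E a b) (h2 : Rch N E b c) (h3 : Rch N E b d) :
    symT (vvec N a b) (vvec N c d) ∈ Submodule.span ℝ (Tgen N E) := by
  rw [vvec_trans c b d, symT_add_right]
  refine add_mem ?_ (symT_base h1 h3)
  rw [show vvec N c b = -vvec N b c from vvec_symm b c, symT_neg_right]
  exact neg_mem (symT_base h1 h2)

lemma skw_zero_left (u : Fin N → ℝ) : skw (0 : Fin N → ℝ) u = 0 := by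
  simp [skw, vecMulVec_zero_right, vecMulVec_zero_left]

lemma skw_base {a b c : Fin N} (h1 : Rch N E a b) (h2 : Rch N E b c) :
    skw (vvec N a b) (vvec N b c) ∈ Submodule.span ℝ (Tgen N E) := by
  by_cases hab : a = b
  · subst hab; rw [vvec_self, skw_zero_left]; exact zero_mem _
  by_cases hbc : b = c
  · subst hbc; rw [vvec_self, skw_zero_right]; exact zero_mem _
  by_cases hac : a = c
  · subst hac
    rw [show vvec N b a = -vvec N a b from vvec_symm a b, skw_neg_right, skw_same,
      neg_zero]
    exact zero_mem _
  · have : skw (vvec N a b) (vvec N b c) = -Bmat N a b c := by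
      rw [Bmat_eq, skw_swap]
    rw [this]
    exact neg_mem (memB hab hac hbc h1 h2)

lemma skw_mem {a b c d : Fin N} (h1 : Rch N E a b) (h2 : Rch N E b c) (h3 : Rch N E b d) :
    skw (vvec N a b) (vvec N c d) ∈ Submodule.span ℝ (Tgen N E) := by
  rw [vvec_trans c b d, skw_add_right]
  refine add_mem ?_ (skw_base h1 h3)
  rw [show vvec N c b = -vvec N b c from vvec_symm b c, skw_neg_right]
  exact neg_mem (skw_base h1 h2)

lemma lie_AA {i j k l : Fin N} (hRij : Rch N E i j) (hRkl : Rch N E k l) :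
    ⁅Amat N i j, Amat N k l⁆ ∈ Submodule.span ℝ (Tgen N E) := by
  rw [Amat_eq, Amat_eq, neg_lie, lie_neg, neg_neg, lie_PP]
  by_cases hR : Rch N E j k
  · exact Submodule.smul_mem _ _ (skw_mem hRij hR (hR.trans hRkl))
  · have h1 : i ≠ k := by rintro rfl; exact hR hRij.symm
    have h2 : i ≠ l := by rintro rfl; exact hR (hRij.symm.trans hRkl.symm)
    have h3 : j ≠ k := by rintro rfl; exact hR (SimpleGraph.Reachable.refl j)
    have h4 : j ≠ l := by rintro rfl; exact hR hRkl.symm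
    rw [dot_vvec_zero h1 h2 h3 h4, zero_smul]
    exact zero_mem _

lemma lie_AB {i j p q r : Fin N} (hRij : Rch N E i j) (hRpq : Rch N E p q) (hRqr : Rch N E q r) :
    ⁅Amat N i j, Bmat N p q r⁆ ∈ Submodule.span ℝ (Tgen N E) := by
  rw [Amat_eq, Bmat_eq, neg_lie, lie_PSkw]
  by_cases hR : Rch N E j p
  · refine neg_mem (sub_mem (Submodule.smul_mem _ _ ?_) (Submodule.smul_mem _ _ ?_))
    · exact symT_mem hRij hR (hR.trans hRpq)
    · exact symT_mem hRij (hR.trans hRpq) ((hR.trans hRpq).trans hRqr)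
  · have hip : i ≠ p := by rintro rfl; exact hR hRij.symm
    have hiq : i ≠ q := by rintro rfl; exact hR (hRij.symm.trans hRpq.symm)
    have hir : i ≠ r := by rintro rfl; exact hR ((hRij.symm.trans hRqr.symm).trans hRpq.symm)
    have hjp : j ≠ p := by rintro rfl; exact hR (SimpleGraph.Reachable.refl j)
    have hjq : j ≠ q := by rintro rfl; exact hR hRpq.symm
    have hjr : j ≠ r := by rintro rfl; exact hR (hRqr.symm.trans hRpq.symm)
    rw [dot_vvec_zero hiq hir hjq hjr, dot_vvec_zero hip hiq hjp hjq,
      zero_smul, zero_smul, sub_zero, neg_zero]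
    exact zero_mem _

lemma lie_BB {p q r s t w : Fin N} (hRpq : Rch N E p q) (hRqr : Rch N E q r)
    (hRst : Rch N E s t) (hRtw : Rch N E t w) :
    ⁅Bmat N p q r, Bmat N s t w⁆ ∈ Submodule.span ℝ (Tgen N E) := by
  rw [Bmat_eq, Bmat_eq, lie_SkwSkw]
  by_cases hR : Rch N E q t
  · have hrt : Rch N E r t := hRqr.symm.trans hR
    refine add_mem (sub_mem (sub_mem (Submodule.smul_mem _ _ ?_)
      (Submodule.smul_mem _ _ ?_)) (Submodule.smul_mem _ _ ?_))
      (Submodule.smul_mem _ _ ?_)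
    · exact skw_mem hRqr (hrt.trans hRst.symm) hrt
    · exact skw_mem hRqr hrt (hrt.trans hRtw)
    · exact skw_mem hRpq (hR.trans hRst.symm) hR
    · exact skw_mem hRpq hR (hR.trans hRtw)
  · have key : ∀ a b : Fin N, Rch N E q a → Rch N E b t → a ≠ b := by
      rintro a b ha hb rfl; exact hR (ha.trans hb)
    have hqp : Rch N E q p := hRpq.symm
    have hqq : Rch N E q q := SimpleGraph.Reachable.refl q
    have hqr : Rch N E q r := hRqr
    have hst : Rch N E s t := hRst
    have htt : Rch N E t t := SimpleGraph.Reachable.refl t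
    have hwt : Rch N E w t := hRtw.symm
    rw [dot_vvec_zero (key q t hqq htt) (key q w hqq hwt) (key r t hqr htt)
        (key r w hqr hwt),
      dot_vvec_zero (key q s hqq hst) (key q t hqq htt) (key r s hqr hst)
        (key r t hqr htt),
      dot_vvec_zero (key p t hqp htt) (key p w hqp hwt) (key q t hqq htt)
        (key q w hqq hwt),
      dot_vvec_zero (key p s hqp hst) (key p t hqp htt) (key q s hqq hst)
        (key q t hqq htt)]
    simp only [zero_smul, sub_zero, zero_sub, neg_zero, add_zero]
    exact zero_mem _

lemma Tgen_lie_closed :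
    ∀ x ∈ Tgen N E, ∀ y ∈ Tgen N E, ⁅x, y⁆ ∈ Submodule.span ℝ (Tgen N E) := by
  rintro x (⟨i, j, hij, hRij, rfl⟩ | ⟨i, j, k, hij, hik, hjk, hRij, hRjk, rfl⟩) y hy
  · rcases hy with ⟨p, q, hpq, hRpq, rfl⟩ | ⟨p, q, r, hpq, hpr, hqr, hRpq, hRqr, rfl⟩
    · exact lie_AA hRij hRpq
    · exact lie_AB hRij hRpq hRqr
  · rcases hy with ⟨p, q, hpq, hRpq, rfl⟩ | ⟨p, q, r, hpq, hpr, hqr, hRpq, hRqr, rfl⟩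
    · rw [← lie_skew]
      exact neg_mem (lie_AB hRpq hRij hRjk)
    · exact lie_BB hRij hRjk hRpq hRqr

lemma sp_lie_closed : ∀ x ∈ Submodule.span ℝ (Tgen N E), ∀ y ∈ Submodule.span ℝ (Tgen N E), ⁅x, y⁆ ∈ Submodule.span ℝ (Tgen N E) := by
  intro x hx y hy
  induction hx, hy using Submodule.span_induction₂ with
  | mem_mem a b ha hb => exact Tgen_lie_closed a ha b hb
  | zero_left b hb => rw [zero_lie]; exact zero_mem _
  | zero_right a ha => rw [lie_zero]; exact zero_mem _
  | add_left a b c _ _ _ h1 h2 => rw [add_lie]; exact add_mem h1 h2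
  | add_right a b c _ _ _ h1 h2 => rw [lie_add]; exact add_mem h1 h2
  | smul_left r a b _ _ h => rw [smul_lie]; exact Submodule.smul_mem _ _ h
  | smul_right r a b _ _ h => rw [lie_smul]; exact Submodule.smul_mem _ _ h

end Main2
section Main3

variable {N : ℕ} {E : Set (Fin N × Fin N)}

lemma symT_comm (u w : Fin N → ℝ) : symT u w = symT w u := by
  simp only [symT]; abel

lemma lie_Amat_Amat {i j k : Fin N} (hij : i ≠ j) (hjk : j ≠ k) (hik : i ≠ k) :
    ⁅Amat N i j, Amat N j k⁆ = Bmat N i j k := by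
  rw [Amat_eq, Amat_eq, neg_lie, lie_neg, neg_neg, lie_PP, Bmat_eq, dot_vvec]
  simp only [hij, hik, hjk, if_true, if_false, if_neg]
  rw [show (0:ℝ) - 0 - 1 + 0 = -1 by ring, neg_smul, one_smul, ← skw_swap]

lemma lie_Bmat_Amat {i a j : Fin N} (hia : i ≠ a) (haj : a ≠ j) (hij : i ≠ j) :
    ⁅Bmat N i a j, Amat N a j⁆ = (2:ℝ) • Amat N i a - (2:ℝ) • Amat N i j := by
  rw [Bmat_eq, Amat_eq, lie_neg, ← lie_skew, neg_neg, lie_PSkw]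
  rw [show vvec N a j ⬝ᵥ vvec N a j = 2 by
    rw [dot_vvec, if_pos rfl, if_neg haj, if_neg (Ne.symm haj), if_pos rfl]; ring]
  rw [show vvec N a j ⬝ᵥ vvec N i a = -1 by
    rw [dot_vvec, if_neg (fun h => hia (h.symm)), if_pos rfl,
      if_neg (fun h => hij h.symm), if_neg (Ne.symm haj)]; ring]
  rw [Amat_eq, Amat_eq, show vvec N i j = vvec N i a + vvec N a j from vvec_trans i a j,
    pexpand, symT_comm]
  simp only [symT]
  module

lemma Amat_decomp {i a j : Fin N} (hia : i ≠ a) (haj : a ≠ j) (hij : i ≠ j) :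
    Amat N i j = Amat N i a -
      (2⁻¹ : ℝ) • ⁅⁅Amat N i a, Amat N a j⁆, Amat N a j⁆ := by
  rw [lie_Amat_Amat hia haj hij, lie_Bmat_Amat hia haj hij]
  rw [smul_sub, smul_smul, smul_smul]
  norm_num

lemma AinLie : ∀ i j : Fin N, (graphOf N E).Reachable i j → i ≠ j →
    Amat N i j ∈ lieGen N (Sgen N E) := by
  intro i j h
  obtain ⟨w⟩ := h
  induction w with
  | nil => intro h; exact absurd rfl h
  | @cons i a j hadj p ih =>
    intro hij
    have hia : Amat N i a ∈ lieGen N (Sgen N E) := by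
      rcases hadj.2 with hmem | hmem
      · exact LieSubalgebra.subset_lieSpan ⟨(i, a), hmem, rfl⟩
      · rw [Amat_comm]
        exact LieSubalgebra.subset_lieSpan ⟨(a, i), hmem, rfl⟩
    by_cases haj : a = j
    · subst haj; exact hia
    · have haj' : Amat N a j ∈ lieGen N (Sgen N E) := ih haj
      rw [Amat_decomp hadj.1 haj hij]
      exact (lieGen N (Sgen N E)).sub_mem hia
        ((lieGen N (Sgen N E)).smul_mem _
          ((lieGen N (Sgen N E)).lie_mem ((lieGen N (Sgen N E)).lie_mem hia haj') haj'))

end Main3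

theorem lieGen_Amat_eq_span_components (N : ℕ) (E : Set (Fin N × Fin N))
    (hE : ∀ p ∈ E, p.1 < p.2) :
    (lieGen N {M | ∃ p ∈ E, M = Amat N p.1 p.2} : Set (Matrix (Fin N) (Fin N) ℝ)) =
      (Submodule.span ℝ
        ({M | ∃ i j : Fin N, i ≠ j ∧ (graphOf N E).Reachable i j ∧ M = Amat N i j} ∪
         {M | ∃ i j k : Fin N, i ≠ j ∧ i ≠ k ∧ j ≠ k ∧
            (graphOf N E).Reachable i j ∧ (graphOf N E).Reachable j k ∧
            M = Bmat N i j k}) :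
        Set (Matrix (Fin N) (Fin N) ℝ)) := by
  have hset : ({M | ∃ i j : Fin N, i ≠ j ∧ (graphOf N E).Reachable i j ∧ M = Amat N i j} ∪
      {M | ∃ i j k : Fin N, i ≠ j ∧ i ≠ k ∧ j ≠ k ∧
        (graphOf N E).Reachable i j ∧ (graphOf N E).Reachable j k ∧
        M = Bmat N i j k}) = Tgen N E := rfl
  have hsgen : {M | ∃ p ∈ E, M = Amat N p.1 p.2} = Sgen N E := rfl
  rw [hset, hsgen]
  apply Set.Subset.antisymm
  · -- lieGen ⊆ span
    let K : LieSubalgebra ℝ (Matrix (Fin N) (Fin N) ℝ) :=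
      { Submodule.span ℝ (Tgen N E) with
        lie_mem' := fun {x y} hx hy => sp_lie_closed x hx y hy }
    have hS : Sgen N E ⊆ K := by
      rintro M ⟨p, hp, rfl⟩
      apply Submodule.subset_span
      left
      exact ⟨p.1, p.2, (hE p hp).ne, (SimpleGraph.Adj.reachable
        ⟨(hE p hp).ne, Or.inl hp⟩), rfl⟩
    have h1 : lieGen N (Sgen N E) ≤ K := LieSubalgebra.lieSpan_le.mpr hS
    intro x hx
    exact h1 hx
  · -- span ⊆ lieGen
    have : Tgen N E ⊆ ((lieGen N (Sgen N E) : Submodule ℝ (Matrix (Fin N) (Fin N) ℝ)) :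
        Set (Matrix (Fin N) (Fin N) ℝ)) := by
      rintro M (⟨i, j, hij, hRij, rfl⟩ | ⟨i, j, k, hij, hik, hjk, hRij, hRjk, rfl⟩)
      · exact AinLie i j hRij hij
      · rw [← lie_Amat_Amat hij hjk hik]
        exact (lieGen N (Sgen N E)).lie_mem (AinLie i j hRij hij) (AinLie j k hRjk hjk)
    intro x hx
    exact Submodule.span_le.mpr this hx
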